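/- (Stone–von Neumann theorem for finite Heisenberg-type groups) Let H be a finite group with center Z, such that [H,H] ⊆ Z, and let χ : Z → ℂ^× be a character such that the induced pairing H/Z × H/Z → ℂ^×, (xZ, yZ) ↦ χ([x,y]), is nondegenerate. Then up to isomorphism there is exactly one irreducible complex representation V of H on which Z acts through χ, and dim V = √([H : Z]). -/

import Mathlib

open CategoryTheory Module
open scoped commutatorElement

noncomputable section StoneVN

namespace StoneVN

variable {H : Type} [Group H] [Fintype H]

/-- The left regular representation of `H` on `H → ℂ`. -/
def lreg : Representation ℂ H (H → ℂ) where
  toFun g :=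
    { toFun := fun f h => f (g⁻¹ * h)
      map_add' := fun _ _ => rfl
      map_smul' := fun _ _ => rfl }
  map_one' := by
    refine LinearMap.ext fun f => funext fun h => ?_
    simp
  map_mul' g₁ g₂ := by
    refine LinearMap.ext fun f => funext fun h => ?_
    simp [Module.End.mul_apply, mul_assoc]

@[simp] lemma lreg_apply (g : H) (f : H → ℂ) (h : H) : lreg g f h = f (g⁻¹ * h) := rfl

/-- Restriction of a representation to an invariant submodule. -/
def subρ {M : Type} [AddCommGroup M] [Module ℂ M] (ρ : Representation ℂ H M)
    (p : Submodule ℂ M) (hp : ∀ g : H, ∀ v ∈ p, ρ g v ∈ p) : Representation ℂ H p where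
  toFun g := (ρ g).restrict (fun v hv => hp g v hv)
  map_one' := by
    refine LinearMap.ext fun v => Subtype.ext ?_
    simp [LinearMap.restrict_apply]
  map_mul' g₁ g₂ := by
    refine LinearMap.ext fun v => Subtype.ext ?_
    simp [LinearMap.restrict_apply, Module.End.mul_apply]

@[simp] lemma subρ_apply {M : Type} [AddCommGroup M] [Module ℂ M] (ρ : Representation ℂ H M)
    (p : Submodule ℂ M) (hp : ∀ g : H, ∀ v ∈ p, ρ g v ∈ p) (g : H) (v : p) :
    (subρ ρ p hp g v : M) = ρ g (v : M) := rfl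

/-- If a nonzero finite-dimensional representation has no nontrivial invariant submodules,
it is simple as an object of `FDRep ℂ H`. -/
theorem simple_of_submodules (X : FDRep ℂ H) (hne : ∃ v : X, v ≠ 0)
    (hss : ∀ p : Submodule ℂ X, (∀ (g : H) (v : X), v ∈ p → X.ρ g v ∈ p) → p = ⊥ ∨ p = ⊤) :
    Simple X := by
  constructor
  intro Y f hmono
  have hcomm : ∀ (g : H) (y : Y), f.hom (Y.ρ g y) = X.ρ g (f.hom y) :=
    fun g y => by have := ConcreteCategory.congr_hom (f.comm g) y; exact this
  constructor
  · intro hiso h0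
    obtain ⟨v, hv⟩ := hne
    have h2 : (inv f).hom ≫ f.hom = 𝟙 X.V := by
      rw [← Action.comp_hom, IsIso.inv_hom_id, Action.id_hom]
    have h3 : f.hom ((inv f).hom v) = v := by have := ConcreteCategory.congr_hom h2 v; exact this
    have h4 : f.hom = 0 := by rw [h0]; exact Action.zero_hom
    rw [h4] at h3
    exact hv (h3.symm.trans rfl)
  · intro hf0
    -- injectivity of `f.hom`
    have hKinv : ∀ g : H, ∀ v ∈ LinearMap.ker f.hom.hom.hom, Y.ρ g v ∈ LinearMap.ker f.hom.hom.hom := by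
      intro g v hv
      rw [LinearMap.mem_ker] at hv ⊢
      exact (hcomm g v).trans (by change X.ρ g (f.hom.hom.hom v) = 0; rw [hv, map_zero])
    let ι : FDRep.of (subρ Y.ρ (LinearMap.ker f.hom.hom.hom) hKinv) ⟶ Y :=
      ⟨FGModuleCat.ofHom (LinearMap.ker f.hom.hom.hom).subtype, fun g => rfl⟩
    have hιf : ι ≫ f =
        (0 : FDRep.of (subρ Y.ρ (LinearMap.ker f.hom.hom.hom) hKinv) ⟶ Y) ≫ f := by
      rw [Limits.zero_comp]
      apply Action.hom_ext
      refine FGModuleCat.hom_ext (LinearMap.ext fun v => ?_)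
      have hv : f.hom v.1 = 0 := v.2
      calc ((ι ≫ f).hom) v = f.hom v.1 := rfl
        _ = 0 := hv
        _ = (0 : FDRep.of (subρ Y.ρ (LinearMap.ker f.hom.hom.hom) hKinv) ⟶ X).hom v := by
              rw [Action.zero_hom]; rfl
    have hι0 : ι = 0 := (cancel_mono f).mp hιf
    have hker : LinearMap.ker f.hom.hom.hom = ⊥ := by
      rw [Submodule.eq_bot_iff]
      intro x hx
      have h5 : ι.hom ⟨x, hx⟩ = (0 : FDRep.of (subρ Y.ρ (LinearMap.ker f.hom.hom.hom) hKinv) ⟶ Y).hom ⟨x, hx⟩ := by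
        rw [hι0]
      rw [Action.zero_hom] at h5
      exact h5
    have hinj : Function.Injective f.hom.hom.hom := by
      rw [← LinearMap.ker_eq_bot]; exact hker
    -- the range is an invariant submodule
    have hRinv : ∀ (g : H) (v : X), v ∈ LinearMap.range f.hom.hom.hom → X.ρ g v ∈ LinearMap.range f.hom.hom.hom := by
      rintro g v ⟨y, rfl⟩
      exact ⟨Y.ρ g y, hcomm g y⟩
    rcases hss (LinearMap.range f.hom.hom.hom) hRinv with hbot | htop
    · exfalso
      apply hf0
      apply Action.hom_ext
      refine FGModuleCat.hom_ext (LinearMap.ext fun y => ?_)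
      have hy : f.hom y ∈ LinearMap.range f.hom.hom.hom := ⟨y, rfl⟩
      rw [hbot, Submodule.mem_bot] at hy
      rw [Action.zero_hom]
      exact hy.trans rfl
    · have hbij : Function.Bijective f.hom.hom.hom := ⟨hinj, LinearMap.range_eq_top.mp htop⟩
      let e := LinearEquiv.ofBijective f.hom.hom.hom hbij
      haveI : IsIso f.hom := by
        refine ⟨FGModuleCat.ofHom e.symm.toLinearMap, ?_, ?_⟩
        · exact FGModuleCat.hom_ext (LinearMap.ext fun v => e.symm_apply_apply v)
        · exact FGModuleCat.hom_ext (LinearMap.ext fun v => e.apply_symm_apply v)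
      infer_instance

end StoneVN

end StoneVN

open StoneVN Module

/-- Stone–von Neumann for finite Heisenberg-type groups: if `H` is a finite group with
center `Z`, `[H,H] ⊆ Z`, and `χ : Z → ℂˣ` is a character for which the commutator pairing
`(x, y) ↦ χ(⁅x,y⁆)` on `H/Z` is nondegenerate, then up to isomorphism there is exactly one
irreducible complex representation of `H` on which `Z` acts through `χ`, and its dimension
squared equals the index `[H : Z]`. -/
theorem stmt_3 (H : Type) [Group H] [Fintype H]
    (hc : ∀ x y : H, ⁅x, y⁆ ∈ Subgroup.center H)
    (χ : Subgroup.center H →* ℂˣ)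
    (hnd : ∀ x : H, x ∉ Subgroup.center H → ∃ y : H, χ ⟨⁅x, y⁆, hc x y⟩ ≠ 1) :
    ∃ V : FDRep ℂ H, Simple V ∧
      (∀ z : Subgroup.center H, V.ρ (z : H) = (χ z : ℂ) • (1 : V →ₗ[ℂ] V)) ∧
      (Module.finrank ℂ V) ^ 2 = (Subgroup.center H).index ∧
      ∀ W : FDRep ℂ H, Simple W →
        (∀ z : Subgroup.center H, W.ρ (z : H) = (χ z : ℂ) • (1 : W →ₗ[ℂ] W)) →
        Nonempty (V ≅ W) := by
  classical
  -- character lemmas for representations with central character χ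
  have char_mul_central : ∀ (W : FDRep ℂ H),
      (∀ z : Subgroup.center H, W.ρ (z : H) = (χ z : ℂ) • (1 : W →ₗ[ℂ] W)) →
      ∀ (z : Subgroup.center H) (x : H),
      W.character ((z : H) * x) = (χ z : ℂ) * W.character x := by
    intro W hW z x
    show LinearMap.trace ℂ W (W.ρ ((z : H) * x)) = _
    rw [map_mul, hW z, smul_mul_assoc, one_mul, map_smul, smul_eq_mul]
    rfl
  have char_central : ∀ (W : FDRep ℂ H),
      (∀ z : Subgroup.center H, W.ρ (z : H) = (χ z : ℂ) • (1 : W →ₗ[ℂ] W)) →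
      ∀ (z : Subgroup.center H),
      W.character (z : H) = (χ z : ℂ) * (finrank ℂ W : ℂ) := by
    intro W hW z
    have := char_mul_central W hW z 1
    rw [mul_one] at this
    rw [this, FDRep.char_one]
  have char_zero : ∀ (W : FDRep ℂ H),
      (∀ z : Subgroup.center H, W.ρ (z : H) = (χ z : ℂ) • (1 : W →ₗ[ℂ] W)) →
      ∀ x : H, x ∉ Subgroup.center H → W.character x = 0 := by
    intro W hW x hx
    obtain ⟨y, hy⟩ := hnd x hx
    have key : W.character x = (χ ⟨⁅y, x⁆, hc y x⟩ : ℂ) * W.character x := by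
      conv_lhs => rw [← FDRep.char_conj W x y]
      have hyx : y * x * y⁻¹ = (⁅y, x⁆ : H) * x := by group
      rw [hyx, char_mul_central W hW ⟨⁅y, x⁆, hc y x⟩ x]
    have hne1 : (χ ⟨⁅y, x⁆, hc y x⟩ : ℂ) ≠ 1 := by
      have h1 : (⟨⁅y, x⁆, hc y x⟩ : Subgroup.center H)
          = (⟨⁅x, y⁆, hc x y⟩ : Subgroup.center H)⁻¹ := by
        ext
        simp [commutatorElement_inv]
      intro h
      apply hy
      have h2 : χ ⟨⁅y, x⁆, hc y x⟩ = 1 := Units.ext (by simpa using h)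
      rw [h1, map_inv, inv_eq_one] at h2
      exact h2
    have h2 : ((χ ⟨⁅y, x⁆, hc y x⟩ : ℂ) - 1) * W.character x = 0 := by
      linear_combination -key
    rcases mul_eq_zero.mp h2 with h | h
    · exact absurd (sub_eq_zero.mp h) hne1
    · exact h
  -- orthogonality sums
  have char_sum : ∀ (V W : FDRep ℂ H),
      (∀ z : Subgroup.center H, V.ρ (z : H) = (χ z : ℂ) • (1 : V →ₗ[ℂ] V)) →
      (∀ z : Subgroup.center H, W.ρ (z : H) = (χ z : ℂ) • (1 : W →ₗ[ℂ] W)) →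
      ∑ g : H, V.character g * W.character g⁻¹ =
        (Nat.card (Subgroup.center H) : ℂ) * ((finrank ℂ V : ℂ) * (finrank ℂ W : ℂ)) := by
    intro V W hV hW
    have hterm : ∀ g : H, V.character g * W.character g⁻¹ =
        if g ∈ Subgroup.center H then ((finrank ℂ V : ℂ) * (finrank ℂ W : ℂ)) else 0 := by
      intro g
      by_cases hg : g ∈ Subgroup.center H
      · rw [if_pos hg]
        have hVg := char_central V hV ⟨g, hg⟩
        have hWg := char_central W hW (⟨g, hg⟩⁻¹ : Subgroup.center H)
        have hcoe : ((⟨g, hg⟩⁻¹ : Subgroup.center H) : H) = g⁻¹ := rfl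
        rw [hcoe, map_inv] at hWg
        rw [hVg, hWg]
        have hu : (χ ⟨g, hg⟩ : ℂ) * ((χ ⟨g, hg⟩)⁻¹ : ℂˣ) = 1 := by
          rw [← Units.val_mul, mul_inv_cancel, Units.val_one]
        calc (χ ⟨g, hg⟩ : ℂ) * (finrank ℂ V : ℂ) * (((χ ⟨g, hg⟩)⁻¹ : ℂˣ) * (finrank ℂ W : ℂ))
            = ((χ ⟨g, hg⟩ : ℂ) * ((χ ⟨g, hg⟩)⁻¹ : ℂˣ)) * ((finrank ℂ V : ℂ) * (finrank ℂ W : ℂ)) := by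
              ring
          _ = (finrank ℂ V : ℂ) * (finrank ℂ W : ℂ) := by rw [hu, one_mul]
      · rw [if_neg hg, char_zero V hV g hg, zero_mul]
    rw [Finset.sum_congr rfl fun g _ => hterm g, ← Finset.sum_filter, Finset.sum_const,
      nsmul_eq_mul]
    congr 2
    rw [Nat.card_eq_fintype_card, Fintype.card_subtype]
  -- the orthonormality relation
  haveI hinv : Invertible ((Fintype.card H : ℂ)) :=
    invertibleOfNonzero (by exact_mod_cast Fintype.card_ne_zero)
  have horth : ∀ (V W : FDRep ℂ H), Simple V → Simple W →
      ∑ g : H, V.character g * W.character g⁻¹ =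
        (Fintype.card H : ℂ) * (if Nonempty (V ≅ W) then (1 : ℂ) else 0) := by
    intro V W hVs hWs
    have hne : (Nat.card H : ℂ) ≠ 0 := by exact_mod_cast Nat.card_pos.ne'
    letI : Invertible ((Nat.card H : ℂ)) := invertibleOfNonzero hne
    have h := FDRep.char_orthonormal (k := ℂ) V W
    rw [Nat.card_eq_fintype_card] at h hne
    rw [inv_mul_eq_iff_eq_mul₀ hne] at h
    rw [h]
  -- dimension of any simple representation with central character χ
  have hZcard_pos : (0 : ℕ) < Nat.card (Subgroup.center H) := Nat.card_pos
  have hdim : ∀ (W : FDRep ℂ H), Simple W →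
      (∀ z : Subgroup.center H, W.ρ (z : H) = (χ z : ℂ) • (1 : W →ₗ[ℂ] W)) →
      (finrank ℂ W) ^ 2 = (Subgroup.center H).index := by
    intro W hWs hW
    have h1 := horth W W hWs hWs
    rw [if_pos ⟨Iso.refl W⟩, mul_one, char_sum W W hW hW] at h1
    have h4 : Nat.card (Subgroup.center H) * (finrank ℂ W * finrank ℂ W) = Fintype.card H := by
      exact_mod_cast h1
    have h5 : Nat.card (Subgroup.center H) * (Subgroup.center H).index = Fintype.card H := by
      rw [← Nat.card_eq_fintype_card]
      exact Subgroup.card_mul_index _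
    have h6 : Nat.card (Subgroup.center H) * (finrank ℂ W * finrank ℂ W)
        = Nat.card (Subgroup.center H) * (Subgroup.center H).index := by rw [h4, h5]
    have h7 := Nat.eq_of_mul_eq_mul_left hZcard_pos h6
    rw [pow_two]
    exact h7
  -- construction of a representation with central character χ
  let S : Submodule ℂ (H → ℂ) :=
    { carrier := {f | ∀ (z : Subgroup.center H) (h : H), f (h * (z : H)) = ((χ z)⁻¹ : ℂˣ) * f h}
      add_mem' := by
        intro a b ha hb z h
        simp only [Pi.add_apply, ha z h, hb z h]
        ring
      zero_mem' := by
        intro z h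
        simp
      smul_mem' := by
        intro c f hf z h
        simp only [Pi.smul_apply, hf z h, smul_eq_mul]
        ring }
  have hSinv : ∀ g : H, ∀ f ∈ S, lreg g f ∈ S := by
    intro g f hf z h
    show f (g⁻¹ * (h * (z : H))) = _ * f (g⁻¹ * h)
    rw [← mul_assoc]
    exact hf z (g⁻¹ * h)
  have hScent : ∀ (z : Subgroup.center H) (f : H → ℂ), f ∈ S →
      lreg (z : H) f = ((χ z : ℂˣ) : ℂ) • f := by
    intro z f hf
    funext h
    have hz : ((z : H))⁻¹ * h = h * ((z⁻¹ : Subgroup.center H) : H) := by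
      have h1 : h * ((z⁻¹ : Subgroup.center H) : H) = ((z⁻¹ : Subgroup.center H) : H) * h :=
        Subgroup.mem_center_iff.mp (z⁻¹ : Subgroup.center H).2 h
      rw [h1]
      simp
    show f ((z : H)⁻¹ * h) = (χ z : ℂ) * f h
    rw [hz, hf z⁻¹ h, map_inv, inv_inv]
  let f₀ : H → ℂ := fun h =>
    if hh : h ∈ Subgroup.center H then (((χ ⟨h, hh⟩)⁻¹ : ℂˣ) : ℂ) else 0
  have hf₀S : f₀ ∈ S := by
    intro z h
    by_cases hh : h ∈ Subgroup.center H
    · have hhz : h * (z : H) ∈ Subgroup.center H := mul_mem hh z.2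
      have hmk : (⟨h * (z : H), hhz⟩ : Subgroup.center H) = ⟨h, hh⟩ * z := rfl
      show (if hh2 : h * (z : H) ∈ Subgroup.center H then (((χ ⟨h * (z : H), hh2⟩)⁻¹ : ℂˣ) : ℂ) else 0)
          = _ * (if hh2 : h ∈ Subgroup.center H then (((χ ⟨h, hh2⟩)⁻¹ : ℂˣ) : ℂ) else 0)
      rw [dif_pos hhz, dif_pos hh, hmk, map_mul, mul_inv, Units.val_mul]
      ring
    · have hhz : h * (z : H) ∉ Subgroup.center H := by
        intro hmem
        apply hh
        have := mul_mem hmem (inv_mem z.2)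
        simpa [mul_assoc] using this
      show (if hh2 : h * (z : H) ∈ Subgroup.center H then (((χ ⟨h * (z : H), hh2⟩)⁻¹ : ℂˣ) : ℂ) else 0)
          = _ * (if hh2 : h ∈ Subgroup.center H then (((χ ⟨h, hh2⟩)⁻¹ : ℂˣ) : ℂ) else 0)
      rw [dif_neg hhz, dif_neg hh, mul_zero]
  have hf₀ne : f₀ ≠ 0 := by
    intro h0
    have h1 : f₀ 1 = 0 := congrFun h0 1
    have h2 : f₀ 1 = 1 := by
      show (if hh : (1 : H) ∈ Subgroup.center H then (((χ ⟨1, hh⟩)⁻¹ : ℂˣ) : ℂ) else 0) = 1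
      rw [dif_pos (Subgroup.one_mem _)]
      have : (⟨(1 : H), Subgroup.one_mem _⟩ : Subgroup.center H) = 1 := rfl
      rw [this, map_one, inv_one, Units.val_one]
    rw [h1] at h2
    exact one_ne_zero h2.symm
  have hSne : S ≠ ⊥ := by
    intro hb
    exact hf₀ne ((Submodule.eq_bot_iff S).mp hb f₀ hf₀S)
  -- pick an invariant submodule of minimal dimension
  let Pr : Submodule ℂ (H → ℂ) → Prop := fun p =>
    (∀ g : H, ∀ v ∈ p, lreg g v ∈ p) ∧ p ≤ S ∧ p ≠ ⊥
  let ns : Set ℕ := {n | ∃ p, Pr p ∧ finrank ℂ p = n}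
  have hnsne : ns.Nonempty := ⟨finrank ℂ S, S, ⟨hSinv, le_rfl, hSne⟩, rfl⟩
  obtain ⟨p, hp, hpn⟩ := Nat.sInf_mem hnsne
  have hmin : ∀ q : Submodule ℂ (H → ℂ), Pr q → sInf ns ≤ finrank ℂ q :=
    fun q hq => Nat.sInf_le ⟨q, hq, rfl⟩
  obtain ⟨hpinv, hpS, hpbot⟩ := hp
  let ρV : Representation ℂ H p := subρ lreg p hpinv
  let V : FDRep ℂ H := FDRep.of ρV
  have hcent' : ∀ z : Subgroup.center H,
      ρV (z : H) = ((χ z : ℂˣ) : ℂ) • (1 : p →ₗ[ℂ] p) := by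
    intro z
    refine LinearMap.ext fun v => Subtype.ext ?_
    have h1 : lreg (z : H) (v : H → ℂ) = ((χ z : ℂˣ) : ℂ) • (v : H → ℂ) :=
      hScent z (v : H → ℂ) (hpS v.2)
    show ((subρ lreg p hpinv (z : H)) v : H → ℂ)
        = (((((χ z : ℂˣ) : ℂ) • (1 : p →ₗ[ℂ] p)) v : p) : H → ℂ)
    rw [subρ_apply, h1]
    rfl
  have hVcent : ∀ z : Subgroup.center H, V.ρ (z : H) = (χ z : ℂ) • (1 : V →ₗ[ℂ] V) :=
    fun z => hcent' z
  have hss' : ∀ q : Submodule ℂ p, (∀ (g : H) (v : p), v ∈ q → ρV g v ∈ q) →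
      q = ⊥ ∨ q = ⊤ := by
    intro q hq
    by_cases hqbot : q = ⊥
    · left; exact hqbot
    right
    have hq'inv : ∀ g : H, ∀ v ∈ q.map p.subtype, lreg g v ∈ q.map p.subtype := by
      rintro g v ⟨w, hw, rfl⟩
      exact ⟨ρV g w, hq g w hw, rfl⟩
    have hq'S : q.map p.subtype ≤ S := le_trans (Submodule.map_subtype_le p q) hpS
    have hq'bot : q.map p.subtype ≠ ⊥ := by
      obtain ⟨x, hx, hx0⟩ := (Submodule.ne_bot_iff q).mp hqbot
      intro hb
      have hmem : (x : H → ℂ) ∈ q.map p.subtype := ⟨x, hx, rfl⟩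
      rw [hb, Submodule.mem_bot] at hmem
      exact hx0 (Subtype.ext hmem)
    have h1 : sInf ns ≤ finrank ℂ (q.map p.subtype) := hmin _ ⟨hq'inv, hq'S, hq'bot⟩
    have h2 : finrank ℂ (q.map p.subtype) = finrank ℂ q :=
      Submodule.finrank_map_subtype_eq p q
    have h3 : finrank ℂ p ≤ finrank ℂ q := by
      rw [hpn, ← h2]
      exact h1
    have h4 : finrank ℂ q = finrank ℂ p := le_antisymm (Submodule.finrank_le q) h3
    exact Submodule.eq_top_of_finrank_eq h4
  have hne' : ∃ v : p, v ≠ 0 := by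
    obtain ⟨x, hx, hx0⟩ := Submodule.exists_mem_ne_zero_of_ne_bot hpbot
    exact ⟨⟨x, hx⟩, fun h => hx0 (congrArg Subtype.val h)⟩
  haveI hVsimple : Simple V :=
    simple_of_submodules V (by exact hne') (by exact hss')
  refine ⟨V, hVsimple, hVcent, hdim V hVsimple hVcent, ?_⟩
  intro W hWs hW
  by_contra hno
  have h1 := horth V W hVsimple hWs
  rw [if_neg hno, mul_zero, char_sum V W hVcent hW] at h1
  have hidx : (Subgroup.center H).index ≠ 0 := Subgroup.index_ne_zero_of_finite
  have hVdim : finrank ℂ V ≠ 0 := fun h0 => hidx (by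
    rw [← hdim V hVsimple hVcent, h0]
    norm_num)
  have hWdim : finrank ℂ W ≠ 0 := fun h0 => hidx (by
    rw [← hdim W hWs hW, h0]
    norm_num)
  have h2 : (Nat.card (Subgroup.center H) : ℂ) * ((finrank ℂ V : ℂ) * (finrank ℂ W : ℂ)) ≠ 0 := by
    apply mul_ne_zero
    · exact_mod_cast hZcard_pos.ne'
    · exact mul_ne_zero (by exact_mod_cast hVdim) (by exact_mod_cast hWdim)
  exact h2 h1
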